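/- Let F(x) ∈ 𝓞[x] be a monic irreducible polynomial with root θ ∈ K̄, with Okutsu invariants m_i, μ_i and depth r. Fix 1 ≤ i ≤ r+1, and let α, η ∈ K̄ be algebraic integers satisfying v(θ − α) > μ_{i−1}, v(θ − η) > μ_{i−1}, and deg_K α = m_i. Then the ramification index e(K(α)/K) divides the ramification index e(K(η)/K). -/

import Mathlib

open Polynomial

noncomputable section

/-- A local field `K` of characteristic zero, presented through the canonical extension `v`
of its normalized discrete valuation (additively written, `v(K*) = ℤ`) to a fixed algebraic
closure of `K`.  The axioms state that `v` is an additive valuation on the algebraic closure,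
that its restriction to `K` is a surjective discrete valuation onto `ℤ` (plus `⊤` at `0`),
that it is invariant under `K`-automorphisms (a property of the canonical extension), that
`K` is complete and that its residue field is finite. -/
structure OkutsuSetup (K : Type) [Field K] [CharZero K] : Type where
  v : AlgebraicClosure K → WithTop ℚ
  v_eq_top_iff : ∀ x, v x = ⊤ ↔ x = 0
  v_mul : ∀ x y, v (x * y) = v x + v y
  v_min_le_add : ∀ x y, min (v x) (v y) ≤ v (x + y)
  v_neg : ∀ x, v (-x) = v x
  v_one : v 1 = 0
  v_base_int : ∀ x : K, x ≠ 0 →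
    ∃ k : ℤ, v (algebraMap K (AlgebraicClosure K) x) = ((k : ℚ) : WithTop ℚ)
  v_base_one : ∃ x : K, v (algebraMap K (AlgebraicClosure K) x) = ((1 : ℚ) : WithTop ℚ)
  v_aut_invariant : ∀ (M : IntermediateField K (AlgebraicClosure K)) (σ : ↥M ≃ₐ[K] ↥M)
    (x : ↥M), v ((σ x : ↥M) : AlgebraicClosure K) = v ((x : ↥M) : AlgebraicClosure K)
  complete : ∀ a : ℕ → K,
    (∀ N : ℚ, ∃ M : ℕ, ∀ p q : ℕ, M ≤ p → M ≤ q →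
      ((N : ℚ) : WithTop ℚ) < v (algebraMap K (AlgebraicClosure K) (a p - a q))) →
    ∃ b : K, ∀ N : ℚ, ∃ M : ℕ, ∀ p : ℕ, M ≤ p →
      ((N : ℚ) : WithTop ℚ) < v (algebraMap K (AlgebraicClosure K) (a p - b))
  finite_residue : ∃ T : Finset K, ∀ x : K,
    0 ≤ v (algebraMap K (AlgebraicClosure K) x) →
    ∃ y ∈ T, 0 < v (algebraMap K (AlgebraicClosure K) (x - y))

namespace OkutsuSetup

variable {K : Type} [Field K] [CharZero K]

/-- The valuation of `K` itself. -/
def vK (S : OkutsuSetup K) (x : K) : WithTop ℚ :=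
  S.v (algebraMap K (AlgebraicClosure K) x)

/-- The ring of integers `𝓞` of `K`. -/
def integers (S : OkutsuSetup K) : Subring K where
  carrier := {x : K | 0 ≤ S.vK x}
  zero_mem' := by
    show (0 : WithTop ℚ) ≤ S.vK 0
    unfold vK
    rw [map_zero, (S.v_eq_top_iff 0).mpr rfl]
    exact le_top
  one_mem' := by
    show (0 : WithTop ℚ) ≤ S.vK 1
    unfold vK
    rw [map_one, S.v_one]
  add_mem' := by
    intro a b ha hb
    show (0 : WithTop ℚ) ≤ S.vK (a + b)
    unfold vK
    rw [map_add]
    exact le_trans (le_min ha hb) (S.v_min_le_add _ _)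
  mul_mem' := by
    intro a b ha hb
    show (0 : WithTop ℚ) ≤ S.vK (a * b)
    unfold vK
    rw [map_mul, S.v_mul]
    exact add_nonneg ha hb
  neg_mem' := by
    intro a ha
    show (0 : WithTop ℚ) ≤ S.vK (-a)
    unfold vK
    rw [map_neg, S.v_neg]
    exact ha

/-- The maximal ideal `𝔪` of the ring of integers of `K`. -/
def maximalIdeal (S : OkutsuSetup K) : Ideal S.integers where
  carrier := {x : S.integers | 0 < S.vK (x : K)}
  zero_mem' := by
    show (0 : WithTop ℚ) < S.vK ((0 : S.integers) : K)
    have h0 : ((0 : S.integers) : K) = (0 : K) := rfl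
    rw [h0]
    unfold vK
    rw [map_zero, (S.v_eq_top_iff 0).mpr rfl]
    exact WithTop.coe_lt_top 0
  add_mem' := by
    intro a b ha hb
    show (0 : WithTop ℚ) < S.vK ((a : K) + (b : K))
    refine lt_of_lt_of_le (lt_min ha hb) ?_
    unfold vK
    rw [map_add]
    exact S.v_min_le_add _ _
  smul_mem' := by
    intro c x hx
    show (0 : WithTop ℚ) < S.vK ((c : K) * (x : K))
    unfold vK
    rw [map_mul, S.v_mul]
    calc (0 : WithTop ℚ) < S.v (algebraMap K (AlgebraicClosure K) (x : K)) := hx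
    _ ≤ _ + _ := le_add_of_nonneg_left c.2

/-- The residue field `𝓞/𝔪` of `K`. -/
abbrev Residue (S : OkutsuSetup K) : Type :=
  S.integers ⧸ S.maximalIdeal

/-- The residue characteristic of `K`. -/
def resChar (S : OkutsuSetup K) : ℕ :=
  ringChar S.Residue

/-- Reduction of a polynomial with integer coefficients modulo `𝔪`. -/
def reduce (S : OkutsuSetup K) (F : Polynomial S.integers) : Polynomial S.Residue :=
  F.map (Ideal.Quotient.mk S.maximalIdeal)

/-- Evaluation of a polynomial with coefficients in `𝓞` at a point of the algebraic
closure of `K`. -/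
def evalK (S : OkutsuSetup K) (F : Polynomial S.integers) (θ : AlgebraicClosure K) :
    AlgebraicClosure K :=
  Polynomial.aeval θ (F.map S.integers.subtype)

/-- `v(g)` for a polynomial `g`: the minimum of the valuations of its coefficients. -/
def vPoly (S : OkutsuSetup K) (g : Polynomial S.integers) : WithTop ℚ :=
  (Finset.range (g.natDegree + 1)).inf fun i => S.vK ((g.coeff i : K))

/-- The ramification index `e(E/K)` of a finite subextension `E` of `K̄/K`: the least
positive integer `e` such that all values of `v` on `E*` lie in `(1/e)ℤ`. -/
def ramIdx (S : OkutsuSetup K) (E : IntermediateField K (AlgebraicClosure K)) : ℕ :=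
  sInf {e : ℕ | 0 < e ∧ ∀ x ∈ E, x ≠ (0 : AlgebraicClosure K) →
    ∃ k : ℤ, S.v x = (((k : ℚ) / (e : ℚ) : ℚ) : WithTop ℚ)}

/-- The residual degree `f(E/K)` of a finite subextension `E` of `K̄/K`; since `K` is a
complete discretely valued field, `[E : K] = e(E/K)·f(E/K)`. -/
def resDeg (S : OkutsuSetup K) (E : IntermediateField K (AlgebraicClosure K)) : ℕ :=
  Module.finrank K E / S.ramIdx E

/-- A subextension `E/K` is tamely ramified when its ramification index is prime to the
residue characteristic of `K`. -/
def IsTame (S : OkutsuSetup K) (E : IntermediateField K (AlgebraicClosure K)) : Prop :=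
  Nat.Coprime (S.ramIdx E) S.resChar

/-- The Okutsu invariants `m_0 = 1 ≤ m_1 < ⋯ < m_r < m_{r+1} = n` and
`μ_0 = 0 < μ_1 < ⋯ < μ_r < μ_{r+1} = ∞` of a monic irreducible polynomial of degree `n`
with root `θ`:  `m i` is the least `[K(η):K]` over `η` with `v(θ-η) > μ (i-1)`, and
`μ i` is the greatest value of `v(θ-η)` over `η` with `[K(η):K] = m i`.
`r` is the depth: the number of indices `i ≥ 1` with `m i < n`. -/
structure OkutsuData (S : OkutsuSetup K) (θ : AlgebraicClosure K) (n : ℕ) : Type where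
  r : ℕ
  m : ℕ → ℕ
  μ : ℕ → WithTop ℚ
  m_zero : m 0 = 1
  mu_zero : μ 0 = 0
  m_isLeast : ∀ i, 1 ≤ i → i ≤ r + 1 →
    IsLeast {d : ℕ | ∃ η : AlgebraicClosure K,
      (minpoly K η).natDegree = d ∧ μ (i - 1) < S.v (θ - η)} (m i)
  mu_isGreatest : ∀ i, 1 ≤ i → i ≤ r + 1 →
    IsGreatest {c : WithTop ℚ | ∃ η : AlgebraicClosure K,
      (minpoly K η).natDegree = m i ∧ S.v (θ - η) = c} (μ i)
  m_lt_n : ∀ i, 1 ≤ i → i ≤ r → m i < n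
  m_last : m (r + 1) = n

/-- `[F_1, …, F_r]` is an Okutsu frame of the monic irreducible polynomial with root `θ`
and Okutsu invariants `D`: for each `1 ≤ i ≤ r`, `F_i` is the minimal polynomial of some
`α_i ∈ K̄` with `[K(α_i):K] = m_i` and `v(θ - α_i) = μ_i`. -/
def IsFrame (S : OkutsuSetup K) {θ : AlgebraicClosure K} {n : ℕ} (D : OkutsuData S θ n)
    (Fr : ℕ → Polynomial S.integers) : Prop :=
  ∀ i, 1 ≤ i → i ≤ D.r → ∃ α : AlgebraicClosure K,
    (minpoly K α).natDegree = D.m i ∧ S.v (θ - α) = D.μ i ∧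
      (Fr i).map S.integers.subtype = minpoly K α

/-- `φ` is a Montes approximation to the monic irreducible polynomial `F`:  a monic
irreducible polynomial of the same degree `n` having a root `α` with `v(θ - α) > μ_r`,
where `θ` is a root of `F`. -/
def IsMontesApprox (S : OkutsuSetup K) (F φ : Polynomial S.integers) : Prop :=
  φ.Monic ∧ Irreducible (φ.map S.integers.subtype) ∧ φ.natDegree = F.natDegree ∧
    ∃ θ : AlgebraicClosure K, S.evalK F θ = 0 ∧
      ∃ D : OkutsuData S θ F.natDegree, ∃ α : AlgebraicClosure K,
        S.evalK φ α = 0 ∧ D.μ D.r < S.v (θ - α)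

section Aux

variable {K : Type} [Field K] [CharZero K] (S : OkutsuSetup K)

lemma v_zero' : S.v 0 = ⊤ := (S.v_eq_top_iff 0).mpr rfl

lemma v_ne_top' {x : AlgebraicClosure K} (hx : x ≠ 0) : S.v x ≠ ⊤ :=
  fun h => hx ((S.v_eq_top_iff x).mp h)

lemma v_add_eq_right' {a b : AlgebraicClosure K} (h : S.v b < S.v a) :
    S.v (a + b) = S.v b := by
  have hge : S.v b ≤ S.v (a + b) := by
    have := S.v_min_le_add a b
    rwa [min_eq_right h.le] at this
  refine le_antisymm ?_ hge
  by_contra h'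
  push_neg at h'
  have e : a + b + -a = b := by ring
  have h2 := S.v_min_le_add (a + b) (-a)
  rw [e, S.v_neg] at h2
  exact absurd h2 (not_le.mpr (lt_min h' h))

lemma v_multiset_prod' (s : Multiset (AlgebraicClosure K)) :
    S.v s.prod = (s.map S.v).sum := by
  induction s using Multiset.induction with
  | empty => simpa using S.v_one
  | cons a s ih => simp [S.v_mul, ih]

/-- Key lemma: polynomials of degree `< m i` cannot distinguish between points that are
both `μ (i-1)`-close to `θ` (in valuation).  Every root `β` of such a polynomial has
`v(θ - β) ≤ μ (i-1)`, by minimality of `m i`, so `v(α - β) = v(θ - β) = v(η - β)`. -/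
lemma v_aeval_eq_of_close {θ : AlgebraicClosure K} {n : ℕ} (D : OkutsuData S θ n)
    {i : ℕ} (hi1 : 1 ≤ i) (hi2 : i ≤ D.r + 1)
    {α η : AlgebraicClosure K}
    (hαv : D.μ (i - 1) < S.v (θ - α)) (hηv : D.μ (i - 1) < S.v (θ - η))
    {g : Polynomial K} (hg : g ≠ 0) (hdeg : g.natDegree < D.m i) :
    S.v (Polynomial.aeval α g) = S.v (Polynomial.aeval η g) := by
  have hsplit : (g.map (algebraMap K (AlgebraicClosure K))).Splits :=
    IsAlgClosed.splits _
  rw [hsplit.aeval_eq_prod_aroots α,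
    hsplit.aeval_eq_prod_aroots η,
    S.v_mul, S.v_mul, S.v_multiset_prod', S.v_multiset_prod',
    Multiset.map_map, Multiset.map_map]
  congr 1
  refine congrArg Multiset.sum (Multiset.map_congr rfl fun β hβ => ?_)
  have hβ0 : Polynomial.aeval β g = 0 := (Polynomial.mem_aroots.mp hβ).2
  have hmβ : (minpoly K β).natDegree < D.m i :=
    lt_of_le_of_lt (Polynomial.natDegree_le_of_dvd (minpoly.dvd K β hβ0) hg) hdeg
  have hβμ : S.v (θ - β) ≤ D.μ (i - 1) := by
    by_contra hcon
    push_neg at hcon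
    have hlb := (D.m_isLeast i hi1 hi2).2 ⟨β, rfl, hcon⟩
    exact absurd hmβ (not_lt.mpr hlb)
  have e1 : α - β = (α - θ) + (θ - β) := by ring
  have e2 : η - β = (η - θ) + (θ - β) := by ring
  have hvα : S.v (θ - β) < S.v (α - θ) := by
    rw [show α - θ = -(θ - α) by ring, S.v_neg]
    exact lt_of_le_of_lt hβμ hαv
  have hvη : S.v (θ - β) < S.v (η - θ) := by
    rw [show η - θ = -(θ - η) by ring, S.v_neg]
    exact lt_of_le_of_lt hβμ hηv
  show S.v (α - β) = S.v (η - β)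
  rw [e1, e2, S.v_add_eq_right' hvα, S.v_add_eq_right' hvη]

end Aux

end OkutsuSetup

open OkutsuSetup in
/-- Let `F ∈ 𝓞[x]` be monic irreducible with root `θ`, with Okutsu
invariants `m_i, μ_i` and depth `r`.  Fix `1 ≤ i ≤ r + 1` and let `α, η ∈ K̄` be
algebraic integers with `v(θ - α) > μ_{i-1}`, `v(θ - η) > μ_{i-1}` and `[K(α):K] = m_i`.
Then `e(K(α)/K)` divides `e(K(η)/K)`. -/
theorem okutsu_stmt_6 {K : Type} [Field K] [CharZero K] (S : OkutsuSetup K)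
    (F : Polynomial S.integers) (hFmonic : F.Monic)
    (hFirr : Irreducible (F.map S.integers.subtype))
    (n : ℕ) (hFdeg : F.natDegree = n)
    (θ : AlgebraicClosure K) (hθ : S.evalK F θ = 0)
    (D : OkutsuData S θ n)
    (i : ℕ) (hi1 : 1 ≤ i) (hi2 : i ≤ D.r + 1)
    (α η : AlgebraicClosure K) (hαint : 0 ≤ S.v α) (hηint : 0 ≤ S.v η)
    (hαv : D.μ (i - 1) < S.v (θ - α)) (hηv : D.μ (i - 1) < S.v (θ - η))
    (hαdeg : (minpoly K α).natDegree = D.m i) :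
    S.ramIdx (IntermediateField.adjoin K {α}) ∣
      S.ramIdx (IntermediateField.adjoin K {η}) := by
  classical
  set Eα := IntermediateField.adjoin K ({α} : Set (AlgebraicClosure K))
  set Eη := IntermediateField.adjoin K ({η} : Set (AlgebraicClosure K))
  set Sα := {e : ℕ | 0 < e ∧ ∀ x ∈ Eα, x ≠ (0 : AlgebraicClosure K) →
    ∃ k : ℤ, S.v x = (((k : ℚ) / (e : ℚ) : ℚ) : WithTop ℚ)} with hSα
  set Sη := {e : ℕ | 0 < e ∧ ∀ x ∈ Eη, x ≠ (0 : AlgebraicClosure K) →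
    ∃ k : ℤ, S.v x = (((k : ℚ) / (e : ℚ) : ℚ) : WithTop ℚ)} with hSη
  have hrα : S.ramIdx Eα = sInf Sα := rfl
  have hrη : S.ramIdx Eη = sInf Sη := rfl
  by_cases hne : Sη.Nonempty
  · -- the ramification index of K(η) is attained
    have heη : sInf Sη ∈ Sη := Nat.sInf_mem hne
    set e := sInf Sη with he
    have hepos : 0 < e := heη.1
    have hαint : IsIntegral K α := Algebra.IsIntegral.isIntegral α
    have hηint : IsIntegral K η := Algebra.IsIntegral.isIntegral η
    -- the value group of K(α)* is contained in that of K(η)*, hence e ∈ Sα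
    have heα : e ∈ Sα := by
      refine ⟨hepos, fun x hx hx0 => ?_⟩
      -- represent x as a polynomial of degree < m i in α
      have hx' : x ∈ Algebra.adjoin K ({α} : Set (AlgebraicClosure K)) := by
        rw [← IntermediateField.adjoin_simple_toSubalgebra_of_isAlgebraic hαint.isAlgebraic]
        exact hx
      rw [Algebra.adjoin_singleton_eq_range_aeval] at hx'
      obtain ⟨g₀, hg₀⟩ := hx'
      have hpm : (minpoly K α).Monic := minpoly.monic hαint
      set g := g₀ %ₘ (minpoly K α) with hgdef
      have hrep : Polynomial.aeval α g = x := by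
        have hmd := Polynomial.modByMonic_add_div g₀ (minpoly K α)
        have : Polynomial.aeval α (g₀ %ₘ minpoly K α + minpoly K α * (g₀ /ₘ minpoly K α))
            = Polynomial.aeval α g₀ := by rw [hmd]
        have h2 := this.trans hg₀
        rwa [map_add, map_mul, minpoly.aeval, zero_mul, add_zero] at h2
      have hgne : g ≠ 0 := by
        intro h
        rw [h] at hrep
        simp at hrep
        exact hx0 hrep.symm
      have hdeg : g.natDegree < D.m i := by
        rw [← hαdeg]
        refine Polynomial.natDegree_lt_natDegree hgne ?_
        rw [hgdef]
        exact Polynomial.degree_modByMonic_lt g₀ hpm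
      -- v x = v (g(η))
      have hval : S.v x = S.v (Polynomial.aeval η g) := by
        rw [← hrep]
        exact S.v_aeval_eq_of_close D hi1 hi2 hαv hηv hgne hdeg
      have hy0 : Polynomial.aeval η g ≠ 0 := by
        intro h
        have := hval
        rw [h, S.v_zero'] at this
        exact S.v_ne_top' hx0 this
      have hymem : Polynomial.aeval η g ∈ Eη := by
        have hmem : Polynomial.aeval η g ∈ Algebra.adjoin K ({η} : Set (AlgebraicClosure K)) := by
          rw [Algebra.adjoin_singleton_eq_range_aeval]
          exact ⟨g, rfl⟩
        rwa [← IntermediateField.adjoin_simple_toSubalgebra_of_isAlgebraic hηint.isAlgebraic] at hmem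
      obtain ⟨k, hk⟩ := heη.2 _ hymem hy0
      exact ⟨k, hval.trans hk⟩
    -- now sInf Sα divides e, because Sα is closed under gcd
    have hd : sInf Sα ∈ Sα := Nat.sInf_mem ⟨e, heα⟩
    set d := sInf Sα with hdd
    have hdpos : 0 < d := hd.1
    have hgcd : Nat.gcd d e ∈ Sα := by
      refine ⟨Nat.gcd_pos_of_pos_left e hdpos, fun x hx hx0 => ?_⟩
      obtain ⟨k1, h1⟩ := hd.2 x hx hx0
      obtain ⟨k2, h2⟩ := heα.2 x hx hx0
      have hq : ((k1 : ℚ) / (d : ℚ)) = ((k2 : ℚ) / (e : ℚ)) := by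
        have := h1.symm.trans h2
        exact_mod_cast this
      have hd0 : (d : ℚ) ≠ 0 := Nat.cast_ne_zero.mpr hdpos.ne'
      have he0 : (e : ℚ) ≠ 0 := Nat.cast_ne_zero.mpr hepos.ne'
      have hg0 : ((Nat.gcd d e : ℕ) : ℚ) ≠ 0 :=
        Nat.cast_ne_zero.mpr (Nat.gcd_pos_of_pos_left e hdpos).ne'
      have hcross : (k1 : ℚ) * (e : ℚ) = (k2 : ℚ) * (d : ℚ) :=
        (div_eq_div_iff hd0 he0).mp hq
      refine ⟨k1 * Int.gcdA (d : ℤ) (e : ℤ) + k2 * Int.gcdB (d : ℤ) (e : ℤ), ?_⟩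
      rw [h1]
      congr 1
      have hbez : ((Nat.gcd d e : ℕ) : ℚ)
          = (d : ℚ) * ((Int.gcdA (d : ℤ) (e : ℤ) : ℤ) : ℚ)
            + (e : ℚ) * ((Int.gcdB (d : ℤ) (e : ℤ) : ℤ) : ℚ) := by
        have := Int.gcd_eq_gcd_ab (d : ℤ) (e : ℤ)
        have h' : ((Int.gcd (d : ℤ) (e : ℤ) : ℤ) : ℚ)
            = ((d : ℤ) : ℚ) * ((Int.gcdA (d : ℤ) (e : ℤ) : ℤ) : ℚ)
              + ((e : ℤ) : ℚ) * ((Int.gcdB (d : ℤ) (e : ℤ) : ℤ) : ℚ) := by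
          exact_mod_cast congrArg (fun z : ℤ => (z : ℚ)) this
        simpa [Int.gcd] using h'
      rw [div_eq_div_iff hd0 hg0]
      push_cast at hbez ⊢
      linear_combination (k1 : ℚ) * hbez
        + (((Int.gcdB (d : ℤ) (e : ℤ) : ℤ) : ℚ)) * hcross
    have hle : d ≤ Nat.gcd d e := Nat.sInf_le hgcd
    have hge : Nat.gcd d e ≤ d := Nat.gcd_le_left e hdpos
    have : Nat.gcd d e = d := le_antisymm hge hle
    rw [hrα, hrη, ← this]
    exact Nat.gcd_dvd_right d e
  · rw [Set.not_nonempty_iff_eq_empty] at hne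
    rw [hrη, hne, Nat.sInf_empty]
    exact dvd_zero _
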